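/- Every entangled set of reals is an increasing set. -/

import Mathlib

/-- `E` is `n`-entangled. -/
def NEntangled (n : ℕ) (E : Set ℝ) : Prop :=
  ¬ E.Countable ∧
  ∀ F : Set (Fin n → ℝ),
    (∀ x ∈ F, StrictMono x ∧ ∀ i, x i ∈ E) →
    (∀ x ∈ F, ∀ y ∈ F, x ≠ y → ∀ i j, x i ≠ y j) →
    ¬ F.Countable →
    ∀ t : Fin n → Fin 2,
      ∃ x ∈ F, ∃ y ∈ F, x ≠ y ∧ ∀ i, (x i < y i ↔ t i = 0)

/-- `E` is entangled: `n`-entangled for every positive integer `n`. -/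
def Entangled (E : Set ℝ) : Prop := ∀ n : ℕ, 1 ≤ n → NEntangled n E

/-- `I` is an increasing set: `I` is uncountable and for every positive `n` and
every uncountable family `F` of pairwise disjoint `n`-tuples from `I`, there are
distinct `x, y ∈ F` with `x i < y i` for all `i`. -/
def IncreasingSet (I : Set ℝ) : Prop :=
  ¬ I.Countable ∧
  ∀ n : ℕ, 1 ≤ n → ∀ F : Set (Fin n → ℝ),
    (∀ x ∈ F, ∀ i, x i ∈ I) →
    (∀ x ∈ F, ∀ y ∈ F, x ≠ y → ∀ i j, x i ≠ y j) →
    ¬ F.Countable →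
    ∃ x ∈ F, ∃ y ∈ F, x ≠ y ∧ ∀ i, x i < y i

/-- Every entangled set of reals is an increasing set. -/
theorem entangled_increasing (E : Set ℝ) (h : Entangled E) : IncreasingSet E := by
  classical
  refine ⟨(h 1 le_rfl).1, ?_⟩
  intro n hn F hFE hFd hFc
  haveI : NeZero n := ⟨Nat.one_le_iff_ne_zero.mp hn⟩
  -- sorted list of distinct values of a tuple
  set L : (Fin n → ℝ) → List ℝ := fun x => (Finset.image x Finset.univ).sort (· ≤ ·) with hLdef
  have hmemL : ∀ (x : Fin n → ℝ) (i : Fin n), x i ∈ L x := by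
    intro x i
    simp [hLdef, Finset.mem_sort]
  have hLmem : ∀ (x : Fin n → ℝ) (r : ℝ), r ∈ L x → ∃ i, x i = r := by
    intro x r hr
    simpa [hLdef, Finset.mem_sort, eq_comm] using hr
  -- classification by index pattern
  set c : (Fin n → ℝ) → (Fin n → ℕ) := fun x i => (L x).idxOf (x i) with hcdef
  have key : ∃ d : Fin n → ℕ, ¬ {x ∈ F | c x = d}.Countable := by
    by_contra hall
    push_neg at hall
    refine hFc ?_
    have hF : F = ⋃ d : Fin n → ℕ, {x ∈ F | c x = d} := by
      ext x
      simp only [Set.mem_iUnion, Set.mem_setOf_eq]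
      exact ⟨fun hx => ⟨c x, hx, rfl⟩, fun ⟨d, hx, _⟩ => hx⟩
    rw [hF]
    exact Set.countable_iUnion hall
  obtain ⟨d, hG⟩ := key
  set G : Set (Fin n → ℝ) := {x ∈ F | c x = d} with hGdef
  -- common length
  set m : ℕ := (Finset.image d Finset.univ).card with hmdef
  have hlen : ∀ x ∈ G, (L x).length = m := by
    intro x hx
    have hcx : c x = d := hx.2
    have himg : Finset.image d Finset.univ = Finset.range (L x).length := by
      ext j
      simp only [Finset.mem_image, Finset.mem_range, Finset.mem_univ, true_and]
      constructor
      · rintro ⟨i, rfl⟩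
        rw [← hcx]
        exact List.idxOf_lt_length_iff.mpr (hmemL x i)
      · intro hj
        obtain ⟨i, hi⟩ := hLmem x ((L x).get ⟨j, hj⟩) (List.get_mem _ _)
        refine ⟨i, ?_⟩
        rw [← hcx]
        have hnd : (L x).Nodup := Finset.sort_nodup _ _
        show (L x).idxOf (x i) = j
        rw [hi]
        simpa [List.get_eq_getElem] using List.Nodup.idxOf_getElem hnd j hj
    rw [hmdef, himg, Finset.card_range]
  have hdlt : ∀ x ∈ G, ∀ i, d i < m := by
    intro x hx i
    rw [← hlen x hx, ← hx.2]
    exact List.idxOf_lt_length_iff.mpr (hmemL x i)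
  have hget : ∀ x ∈ G, ∀ i : Fin n, (L x).getD (d i) 0 = x i := by
    intro x hx i
    have hcx : c x = d := hx.2
    rw [← hcx]
    have hl : (L x).idxOf (x i) < (L x).length := List.idxOf_lt_length_iff.mpr (hmemL x i)
    rw [List.getD_eq_getElem _ _ hl]
    exact List.getElem_idxOf hl
  have hGne : G.Nonempty := Set.nonempty_iff_ne_empty.mpr (fun he => hG (he ▸ Set.countable_empty))
  haveI : NeZero m := by
    obtain ⟨x, hx⟩ := hGne
    have := hdlt x hx 0
    exact ⟨by omega⟩
  -- the map to sorted tuples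
  set Φ : (Fin n → ℝ) → (Fin m → ℝ) := fun x j => (L x).getD j 0 with hΦdef
  have hΦval : ∀ x ∈ G, ∀ j : Fin m, ∃ i, x i = Φ x j := by
    intro x hx j
    have hj : (j : ℕ) < (L x).length := by rw [hlen x hx]; exact j.2
    have : Φ x j ∈ L x := by
      rw [hΦdef]; simp only
      rw [List.getD_eq_getElem _ _ hj]
      exact List.getElem_mem _
    exact hLmem x _ this
  have hΦmono : ∀ x ∈ G, StrictMono (Φ x) := by
    intro x hx j1 j2 hjj
    have h1 : (j1 : ℕ) < (L x).length := by rw [hlen x hx]; exact j1.2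
    have h2 : (j2 : ℕ) < (L x).length := by rw [hlen x hx]; exact j2.2
    rw [hΦdef]; simp only
    rw [List.getD_eq_getElem _ _ h1, List.getD_eq_getElem _ _ h2]
    exact (Finset.sortedLT_sort _) (show (⟨j1, h1⟩ : Fin (L x).length) < ⟨j2, h2⟩ from hjj)
  have hΦinj : Set.InjOn Φ G := by
    intro x hx y hy hxy
    by_contra hne
    obtain ⟨i1, hi1⟩ := hΦval x hx 0
    obtain ⟨j1, hj1⟩ := hΦval y hy 0
    exact hFd x hx.1 y hy.1 hne i1 j1 (by rw [hi1, hj1, hxy])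
  set F' : Set (Fin m → ℝ) := Φ '' G with hF'def
  have hF'c : ¬ F'.Countable := by
    intro hc
    exact hG (Set.countable_of_injective_of_countable_image hΦinj (by rwa [← hF'def]))
  have hEnt := (h m (Nat.one_le_iff_ne_zero.mpr (NeZero.ne m))).2 F'
    (by
      rintro _ ⟨x, hx, rfl⟩
      refine ⟨hΦmono x hx, fun j => ?_⟩
      obtain ⟨i, hi⟩ := hΦval x hx j
      rw [← hi]; exact hFE x hx.1 i)
    (by
      rintro _ ⟨x, hx, rfl⟩ _ ⟨y, hy, rfl⟩ hne i j
      obtain ⟨i1, hi1⟩ := hΦval x hx i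
      obtain ⟨j1, hj1⟩ := hΦval y hy j
      rw [← hi1, ← hj1]
      exact hFd x hx.1 y hy.1 (fun hxy => hne (by rw [hxy])) i1 j1)
    hF'c (fun _ => 0)
  obtain ⟨a, ⟨x, hx, rfl⟩, b, ⟨y, hy, rfl⟩, hab, hlt⟩ := hEnt
  refine ⟨x, hx.1, y, hy.1, fun hxy => hab (by rw [hxy]), fun i => ?_⟩
  have hd : d i < m := hdlt x hx i
  have := (hlt ⟨d i, hd⟩).mpr rfl
  rwa [show Φ x ⟨d i, hd⟩ = x i from hget x hx i, show Φ y ⟨d i, hd⟩ = y i from hget y hy i] at this
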